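/- For every k ≥ 0 and ρ ≥ 0 there exists a function u₀ ∈ X^k_ρ (hence u₀ ∈ H^k_G) such that u₀ ∉ H^{k+ε}_G for every ε > 0. Concretely, choosing blocks with ‖u_{I,m}‖²_{L²} = [(1+(2m+1)I)^k ⟨I⟩^ρ log(1+I)² (m+1) log(m+2)²]^{−1} for I ∈ 2^ℕ, m ∈ ℕ (and zero for I < 1), one has Σ_{I,m} (1+(2m+1)I)^{k+ε} ‖u_{I,m}‖²_{L²} = ∞ for every ε > 0, while Σ_{I,m} (1+(2m+1)I)^k ⟨I⟩^ρ ‖u_{I,m}‖²_{L²} < ∞. -/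

import Mathlib

open Real

/-- The Sobolev weight `1 + (2m+1)·2^i` of the block indexed by `(i, m) ∈ ℕ × ℕ`
(dyadic frequency `2^i ∈ 2^ℕ`, Hermite mode `m`). -/
noncomputable def blockWeightN (p : ℕ × ℕ) : ℝ :=
  1 + (2 * (p.2 : ℝ) + 1) * (2 : ℝ) ^ p.1

/-- The japanese bracket `⟨2^i⟩ = √(1 + (2^i)²)`. -/
noncomputable def dyadicBracket (i : ℕ) : ℝ :=
  Real.sqrt (1 + ((2 : ℝ) ^ i) ^ 2)

/-- The squared `L²` block norms of the rough potential:
`‖u_{I,m}‖²_{L²} = [(1+(2m+1)I)^k ⟨I⟩^ρ log(1+I)² (m+1) log(m+2)²]⁻¹`. -/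
noncomputable def roughPotentialBlock (k ρ : ℝ) (p : ℕ × ℕ) : ℝ :=
  (blockWeightN p ^ k * dyadicBracket p.1 ^ ρ * Real.log (1 + (2 : ℝ) ^ p.1) ^ 2 *
    ((p.2 : ℝ) + 1) * Real.log ((p.2 : ℝ) + 2) ^ 2)⁻¹

/-- If `2^(n+1) ≤ x²` and `1 < x`, then `(log x)⁻²` is controlled by `(n+1)⁻²`. -/
lemma aux_log_bound (n : ℕ) {x : ℝ} (hx : 1 < x) (h : (2 : ℝ) ^ (n + 1) ≤ x ^ 2) :
    (Real.log x ^ 2)⁻¹ ≤ 4 / Real.log 2 ^ 2 * (((n : ℝ) + 1) ^ 2)⁻¹ := by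
  have hl2 : 0 < Real.log 2 := Real.log_pos one_lt_two
  have hlx : 0 < Real.log x := Real.log_pos hx
  have h1 : ((n : ℝ) + 1) * Real.log 2 ≤ 2 * Real.log x := by
    have h0 := Real.log_le_log (by positivity) h
    rw [Real.log_pow, Real.log_pow] at h0
    push_cast at h0
    linarith
  have key : ((n : ℝ) + 1) ^ 2 * Real.log 2 ^ 2 / 4 ≤ Real.log x ^ 2 := by
    have h2 := mul_le_mul h1 h1 (by positivity) (by positivity)
    nlinarith
  have h4 : (0 : ℝ) < ((n : ℝ) + 1) ^ 2 * Real.log 2 ^ 2 / 4 := by positivity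
  calc (Real.log x ^ 2)⁻¹ ≤ (((n : ℝ) + 1) ^ 2 * Real.log 2 ^ 2 / 4)⁻¹ := by
        gcongr
      _ = 4 / Real.log 2 ^ 2 * (((n : ℝ) + 1) ^ 2)⁻¹ := by
        field_simp

lemma aux_summable_inv_sq : Summable (fun n : ℕ => (((n : ℝ) + 1) ^ 2)⁻¹) := by
  have h := Real.summable_nat_pow_inv.mpr (by norm_num : 1 < 2)
  have h2 := (summable_nat_add_iff 1).mpr h
  exact h2.congr fun n => by push_cast; ring

/-- Summability of `∑ 1/log(1+2^i)²`. -/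
lemma aux_summable_i : Summable (fun i : ℕ => (Real.log (1 + (2 : ℝ) ^ i) ^ 2)⁻¹) := by
  refine Summable.of_nonneg_of_le (fun i => by positivity) (fun i => ?_)
    (aux_summable_inv_sq.mul_left (4 / Real.log 2 ^ 2))
  have h2 : (0 : ℝ) < 2 ^ i := by positivity
  refine aux_log_bound i (by linarith) ?_
  have h3 : (2 : ℝ) ^ (i + 1) = 2 * 2 ^ i := by ring
  nlinarith

/-- Summability of `∑ 1/((m+1) log(m+2)²)`. -/
lemma aux_summable_m :
    Summable (fun m : ℕ => (((m : ℝ) + 1) * Real.log ((m : ℝ) + 2) ^ 2)⁻¹) := by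
  have hpos : ∀ m : ℕ, 0 < ((m : ℝ) + 1) * Real.log ((m : ℝ) + 2) ^ 2 := by
    intro m
    have h1 : (1 : ℝ) < (m : ℝ) + 2 := by
      have : (0 : ℝ) ≤ (m : ℝ) := Nat.cast_nonneg _
      linarith
    have := Real.log_pos h1
    positivity
  refine (summable_condensed_iff_of_nonneg (fun m => by positivity) ?_).mp ?_
  · intro a b ha hab
    have hc : (a : ℝ) ≤ b := Nat.cast_le.mpr hab
    have h0 : (0 : ℝ) ≤ (a : ℝ) := Nat.cast_nonneg _
    have hL : (0 : ℝ) ≤ Real.log ((a : ℝ) + 2) := Real.log_nonneg (by linarith)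
    refine inv_anti₀ (hpos a) (mul_le_mul (by linarith)
      (pow_le_pow_left₀ hL (Real.log_le_log (by linarith) (by linarith)) 2)
      (by positivity) (by linarith))
  · refine Summable.of_nonneg_of_le (fun n => by positivity) (fun n => ?_)
      (aux_summable_inv_sq.mul_left (4 / Real.log 2 ^ 2))
    have h2 : (0 : ℝ) < 2 ^ n := by positivity
    have hcast : ((2 ^ n : ℕ) : ℝ) = 2 ^ n := by push_cast; ring
    have hL : 0 < Real.log (((2 ^ n : ℕ) : ℝ) + 2) := by
      rw [hcast]; exact Real.log_pos (by linarith)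
    calc (2 : ℝ) ^ n * ((((2 ^ n : ℕ) : ℝ) + 1) * Real.log (((2 ^ n : ℕ) : ℝ) + 2) ^ 2)⁻¹
        ≤ (Real.log (((2 ^ n : ℕ) : ℝ) + 2) ^ 2)⁻¹ := by
          rw [mul_inv, ← mul_assoc]
          have hle : (2 : ℝ) ^ n * (((2 ^ n : ℕ) : ℝ) + 1)⁻¹ ≤ 1 := by
            rw [hcast]
            rw [mul_inv_le_iff₀ (by positivity)]
            linarith
          calc (2 : ℝ) ^ n * (((2 ^ n : ℕ) : ℝ) + 1)⁻¹ *
                (Real.log (((2 ^ n : ℕ) : ℝ) + 2) ^ 2)⁻¹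
              ≤ 1 * (Real.log (((2 ^ n : ℕ) : ℝ) + 2) ^ 2)⁻¹ := by gcongr
            _ = (Real.log (((2 ^ n : ℕ) : ℝ) + 2) ^ 2)⁻¹ := one_mul _
      _ ≤ 4 / Real.log 2 ^ 2 * (((n : ℝ) + 1) ^ 2)⁻¹ := by
          apply aux_log_bound n (by rw [hcast]; linarith)
          rw [hcast]
          have e1 : (2 : ℝ) ^ (n + 1) = 2 * 2 ^ n := by ring
          nlinarith

/-- Existence of rough potentials: for all `k, ρ ≥ 0`, the potential with the
above block norms lies in `X^k_ρ` (the weighted series converges) but in no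
`H^{k+ε}_G` with `ε > 0` (the `H^{k+ε}` series diverges). -/
theorem rough_potential_exists (k ρ : ℝ) (hk : 0 ≤ k) (hρ : 0 ≤ ρ) :
    (Summable fun p : ℕ × ℕ =>
        blockWeightN p ^ k * dyadicBracket p.1 ^ ρ * roughPotentialBlock k ρ p) ∧
    ∀ ε : ℝ, 0 < ε →
      ¬ Summable (fun p : ℕ × ℕ => blockWeightN p ^ (k + ε) * roughPotentialBlock k ρ p) := by
  constructor
  · -- convergence of the `X^k_ρ` series
    have e : ∀ p : ℕ × ℕ,
        (Real.log (1 + (2 : ℝ) ^ p.1) ^ 2)⁻¹ *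
          (((p.2 : ℝ) + 1) * Real.log ((p.2 : ℝ) + 2) ^ 2)⁻¹
        = blockWeightN p ^ k * dyadicBracket p.1 ^ ρ * roughPotentialBlock k ρ p := by
      intro p
      have hw : 0 < blockWeightN p := by
        unfold blockWeightN; positivity
      have hb : 0 < dyadicBracket p.1 := Real.sqrt_pos.mpr (by positivity)
      have hw' : (0 : ℝ) < blockWeightN p ^ k := Real.rpow_pos_of_pos hw k
      have hb' : (0 : ℝ) < dyadicBracket p.1 ^ ρ := Real.rpow_pos_of_pos hb ρ
      have h2 : (0 : ℝ) < 2 ^ p.1 := by positivity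
      have hl1 : 0 < Real.log (1 + (2 : ℝ) ^ p.1) := Real.log_pos (by linarith)
      have hm : (0 : ℝ) < (p.2 : ℝ) + 1 := by positivity
      have hl2 : 0 < Real.log ((p.2 : ℝ) + 2) := by
        have : (0 : ℝ) ≤ (p.2 : ℝ) := Nat.cast_nonneg _
        exact Real.log_pos (by linarith)
      unfold roughPotentialBlock
      field_simp
    exact ((aux_summable_i.mul_of_nonneg aux_summable_m
      (fun i => by positivity) (fun m => by positivity)).congr e)
  · -- divergence of every `H^{k+ε}` series
    intro ε hε hs
    have hinj : Function.Injective (fun m : ℕ => ((0 : ℕ), m)) := by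
      intro a b h; simpa using h
    have hs0 : Summable (fun m : ℕ =>
        blockWeightN (0, m) ^ (k + ε) * roughPotentialBlock k ρ (0, m)) :=
      hs.comp_injective hinj
    -- abbreviations
    set K : ℝ := Real.sqrt 2 ^ ρ * Real.log 2 ^ 2 with hK
    have hK0 : 0 < K := by
      have : (0 : ℝ) < Real.sqrt 2 := Real.sqrt_pos.mpr (by norm_num)
      have h2 : (0 : ℝ) < Real.sqrt 2 ^ ρ := Real.rpow_pos_of_pos this ρ
      have hl : 0 < Real.log 2 := Real.log_pos one_lt_two
      positivity
    set Cst : ℝ := ε ^ 2 / 16 * K⁻¹ with hCst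
    have hCst0 : 0 < Cst := by positivity
    -- pointwise lower bound
    have key : ∀ m : ℕ, Cst * ((m : ℝ) + 2)⁻¹ ≤
        blockWeightN (0, m) ^ (k + ε) * roughPotentialBlock k ρ (0, m) := by
      intro m
      have hm0 : (0 : ℝ) ≤ (m : ℝ) := m.cast_nonneg
      have hm1 : (0 : ℝ) < (m : ℝ) + 1 := by linarith
      have hm2 : (1 : ℝ) < (m : ℝ) + 2 := by linarith
      have hL : 0 < Real.log ((m : ℝ) + 2) := Real.log_pos hm2
      have hw : blockWeightN (0, m) = 2 * ((m : ℝ) + 1) := by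
        unfold blockWeightN; push_cast; ring
      have hbr : dyadicBracket 0 = Real.sqrt 2 := by
        unfold dyadicBracket; norm_num
      have hwp : (0 : ℝ) < 2 * ((m : ℝ) + 1) := by linarith
      have hl1 : Real.log (1 + (2 : ℝ) ^ (0 : ℕ)) = Real.log 2 := by norm_num
      have hlog2 : 0 < Real.log 2 := Real.log_pos one_lt_two
      -- rewrite the term
      have eterm : blockWeightN (0, m) ^ (k + ε) * roughPotentialBlock k ρ (0, m)
          = (2 * ((m : ℝ) + 1)) ^ ε *
            (K * (((m : ℝ) + 1) * Real.log ((m : ℝ) + 2) ^ 2))⁻¹ := by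
        unfold roughPotentialBlock
        rw [hw]
        simp only [hbr, hl1]
        rw [Real.rpow_add hwp]
        have hwk : (0 : ℝ) < (2 * ((m : ℝ) + 1)) ^ k := Real.rpow_pos_of_pos hwp k
        have hs2 : (0 : ℝ) < Real.sqrt 2 ^ ρ :=
          Real.rpow_pos_of_pos (Real.sqrt_pos.mpr (by norm_num)) ρ
        rw [hK]
        field_simp
      rw [eterm]
      have hX : (0 : ℝ) < K * (((m : ℝ) + 1) * Real.log ((m : ℝ) + 2) ^ 2) := by positivity
      rw [← div_eq_mul_inv ((2 * ((m : ℝ) + 1)) ^ ε), le_div_iff₀ hX]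
      have hKK : Cst * ((m : ℝ) + 2)⁻¹ * (K * (((m : ℝ) + 1) * Real.log ((m : ℝ) + 2) ^ 2))
          = ε ^ 2 / 16 * (((m : ℝ) + 2)⁻¹ * (((m : ℝ) + 1) * Real.log ((m : ℝ) + 2) ^ 2)) := by
        rw [hCst]; field_simp
      rw [hKK]
      -- bound the logarithm
      have hlog_le : Real.log ((m : ℝ) + 2) ≤ ((m : ℝ) + 2) ^ (ε / 4) / (ε / 4) :=
        Real.log_le_rpow_div (by linarith) (by positivity)
      have hsq : Real.log ((m : ℝ) + 2) ^ 2 ≤ ((m : ℝ) + 2) ^ (ε / 2) * (16 / ε ^ 2) := by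
        have h1 : Real.log ((m : ℝ) + 2) ^ 2 ≤ (((m : ℝ) + 2) ^ (ε / 4) / (ε / 4)) ^ 2 := by
          apply pow_le_pow_left₀ hL.le hlog_le
        have h2 : (((m : ℝ) + 2) ^ (ε / 4) / (ε / 4)) ^ 2
            = ((m : ℝ) + 2) ^ (ε / 2) * (16 / ε ^ 2) := by
          rw [div_pow, ← Real.rpow_natCast (((m : ℝ) + 2) ^ (ε / 4)) 2,
            ← Real.rpow_mul (by linarith)]
          norm_num
          ring_nf
        rw [h2] at h1; exact h1
      calc ε ^ 2 / 16 * (((m : ℝ) + 2)⁻¹ * (((m : ℝ) + 1) * Real.log ((m : ℝ) + 2) ^ 2))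
          ≤ ε ^ 2 / 16 * (((m : ℝ) + 2)⁻¹ *
              (((m : ℝ) + 2) * (((m : ℝ) + 2) ^ (ε / 2) * (16 / ε ^ 2)))) := by
            gcongr
            linarith
        _ = ((m : ℝ) + 2) ^ (ε / 2) := by
            field_simp
        _ ≤ ((m : ℝ) + 2) ^ ε := by
            apply Real.rpow_le_rpow_of_exponent_le (by linarith)
            linarith
        _ ≤ (2 * ((m : ℝ) + 1)) ^ ε := by
            apply Real.rpow_le_rpow (by linarith) (by linarith) hε.le
    -- derive a contradiction with the divergence of the harmonic series
    have hsum2 : Summable (fun m : ℕ => Cst * ((m : ℝ) + 2)⁻¹) :=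
      Summable.of_nonneg_of_le (fun m => by positivity) key hs0
    have hsum3 : Summable (fun m : ℕ => ((m : ℝ) + 2)⁻¹) := by
      have h := hsum2.mul_left Cst⁻¹
      refine h.congr fun m => ?_
      rw [← mul_assoc, inv_mul_cancel₀ hCst0.ne', one_mul]
    have hsum4 : Summable (fun n : ℕ => ((n : ℝ))⁻¹) := by
      refine (summable_nat_add_iff 2).mp (hsum3.congr fun m => ?_)
      push_cast; ring
    exact Real.not_summable_natCast_inv hsum4
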